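/- The conjugates a⁻¹da and ada⁻¹ are nontrivial elements of the rigid stabilizer Rist_G(0): each of them fixes every word of {0,1}* beginning with the letter 1 (and also fixes the one-letter words), and neither equals the identity. Likewise d itself is a nontrivial element of Rist_G(1). -/
import Mathlib


namespace BVTree

/-- States of the automaton (generators, their inverses, and the identity). -/
inductive Q : Type
  | e | qa | qb | qc | qd | qa' | qb' | qc' | qd'
  deriving DecidableEq

open Q

/-- Output function of the automaton. -/
def Qout : Q → Bool → Bool
  | qa, x => !x
  | qa', x => !x
  | _, x => x

/-- Transition function of the automaton. -/
def Qtrans : Q → Bool → Q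
  | qa, false => qd
  | qa, true => e
  | qb, false => qa
  | qb, true => qc
  | qc, _ => qa
  | qd, false => e
  | qd, true => qb
  | qa', false => e
  | qa', true => qd'
  | qb', false => qa'
  | qb', true => qc'
  | qc', _ => qa'
  | qd', false => e
  | qd', true => qb'
  | e, _ => e

/-- The state corresponding to the inverse automorphism. -/
def Qinv : Q → Q
  | e => e
  | qa => qa' | qb => qb' | qc => qc' | qd => qd'
  | qa' => qa | qb' => qb | qc' => qc | qd' => qd

/-- The action of a state on finite binary words. -/
def act : Q → List Bool → List Bool
  | _, [] => []
  | q, x :: w => Qout q x :: act (Qtrans q x) w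

lemma act_inv (q : Q) : ∀ w, act (Qinv q) (act q w) = w := by
  intro w
  induction w generalizing q with
  | nil => rfl
  | cons x w ih =>
    have h1 : Qout (Qinv q) (Qout q x) = x := by cases q <;> cases x <;> rfl
    have h2 : Qtrans (Qinv q) (Qout q x) = Qinv (Qtrans q x) := by
      cases q <;> cases x <;> rfl
    simp [act, h1, h2, ih]

/-- The tree automorphism determined by a state of the automaton. -/
def aut (q : Q) : Equiv.Perm (List Bool) where
  toFun := act q
  invFun := act (Qinv q)
  left_inv := act_inv q
  right_inv := by
    intro w
    have h : Qinv (Qinv q) = q := by cases q <;> rfl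
    simpa [h] using act_inv (Qinv q) w

/-- The automorphism `a`: `a(0w) = 1·d(w)`, `a(1w) = 0·w`. -/
def a : Equiv.Perm (List Bool) := aut qa
/-- The automorphism `b`: `b(0w) = 0·a(w)`, `b(1w) = 1·c(w)`. -/
def b : Equiv.Perm (List Bool) := aut qb
/-- The automorphism `c`: `c(0w) = 0·a(w)`, `c(1w) = 1·a(w)`. -/
def c : Equiv.Perm (List Bool) := aut qc
/-- The automorphism `d`: `d(0w) = 0·w`, `d(1w) = 1·b(w)`. -/
def d : Equiv.Perm (List Bool) := aut qd

/-- The group `G` generated by `a`, `b`, `c`, `d`. -/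
def G : Subgroup (Equiv.Perm (List Bool)) := Subgroup.closure {a, b, c, d}



lemma act_e : ∀ w, act e w = w := by
  intro w; induction w with
  | nil => rfl
  | cons x w ih => simp [act, Qout, Qtrans, ih]

lemma a_apply (w : List Bool) : a (true :: w) = false :: w := by
  show act qa (true :: w) = false :: w
  simp [act, Qout, Qtrans, act_e]

lemma a_apply' (w : List Bool) : a (false :: w) = true :: act qd w := rfl

lemma ainv_apply (w : List Bool) : a⁻¹ (false :: w) = true :: w := by
  show act qa' (false :: w) = true :: w
  simp [act, Qout, Qtrans, act_e]

lemma ainv_apply' (w : List Bool) : a⁻¹ (true :: w) = false :: act qd' w := rfl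

lemma d_apply (w : List Bool) : d (false :: w) = false :: w := by
  show act qd (false :: w) = false :: w
  simp [act, Qout, Qtrans, act_e]

lemma d_nil : d [] = [] := rfl

lemma move1 : (a⁻¹ * d * a) [false, true, false, false] ≠ [false, true, false, false] := by
  decide

lemma move2 : (a * d * a⁻¹) [false, true, false, false] ≠ [false, true, false, false] := by
  decide

lemma move3 : d [true, false, false] ≠ [true, false, false] := by decide

/-- `a⁻¹da` and `ada⁻¹` are nontrivial elements of `Rist_G(0)`, and `d` is a
nontrivial element of `Rist_G(1)`. -/
theorem rigid_stabilizer_elements :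
    (∀ g ∈ ({a⁻¹ * d * a, a * d * a⁻¹} : Set (Equiv.Perm (List Bool))),
      (∀ w : List Bool, g (true :: w) = true :: w) ∧
      (∀ i : Bool, g [i] = [i]) ∧ g ≠ 1) ∧
    ((∀ u : List Bool, ¬ ([true] <+: u) → d u = u) ∧ d ≠ 1) := by
  constructor
  · intro g hg
    rcases hg with hg | hg
    · subst hg
      refine ⟨?_, ?_, ?_⟩
      · intro w
        simp only [Equiv.Perm.mul_apply, a_apply, d_apply, ainv_apply]
      · intro i
        cases i <;> decide
      · intro h
        exact move1 (by rw [h]; rfl)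
    · rcases hg with hg
      subst hg
      refine ⟨?_, ?_, ?_⟩
      · intro w
        simp only [Equiv.Perm.mul_apply, ainv_apply', d_apply, a_apply']
        exact congrArg _ (act_inv qd' w)
      · intro i
        cases i <;> decide
      · intro h
        exact move2 (by rw [h]; rfl)
  · refine ⟨?_, ?_⟩
    · intro u hu
      match u, hu with
      | [], _ => exact d_nil
      | false :: w, _ => exact d_apply w
      | true :: w, h => exact absurd ⟨w, rfl⟩ h
    · intro h
      exact move3 (by rw [h]; rfl)


end BVTree
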